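/- In a 2-dimensional knight graph, if a Hamiltonian cycle (a^i) contains a well-oriented site (a^n, a^{n+1}, a^m, a^{m+1}) with a^{n+1}−a^m = a^{m+1}−a^n ∈ {±2e_i}, then on the board B × [1,2] the closed walk (a^n,1) → (a^{m+1},2) → (a^{m+2},2) → ... → (a^m,2) → (a^{n+1},1) → ... → (a^n,1) is a Hamiltonian cycle: it visits every square of B × [1,2] exactly once and consecutive squares are joined by knight moves. -/

import Mathlib

/-- A knight move in `k` dimensions: coordinates differ in exactly two places,
one by `±1` and one by `±2`. -/
def knightMove {k : ℕ} (a b : Fin k → ℤ) : Prop :=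
  ∃ i j : Fin k, i ≠ j ∧ |a i - b i| = 1 ∧ |a j - b j| = 2 ∧
    ∀ l, l ≠ i → l ≠ j → a l = b l

/-- Membership in the board `∏ [1, n i]`. -/
def onBoard {k : ℕ} (n : Fin k → ℕ) (a : Fin k → ℤ) : Prop :=
  ∀ i, 1 ≤ a i ∧ a i ≤ (n i : ℤ)

/-- A closed knight's tour of the board `∏ [1, n i]`, presented as a cyclic
sequence `a : ZMod N → (Fin k → ℤ)` visiting every board square exactly once,
with consecutive squares joined by knight moves. -/
def IsClosedTour {k : ℕ} (n : Fin k → ℕ) (N : ℕ) (a : ZMod N → Fin k → ℤ) : Prop :=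
  0 < N ∧ (∀ i, onBoard n (a i)) ∧ Function.Injective a ∧
    (∀ x, onBoard n x → ∃ i, a i = x) ∧ ∀ i, knightMove (a i) (a (i + 1))

lemma snoc_inj {x y : Fin 2 → ℤ} {c d : ℤ} (h : (Fin.snoc x c : Fin 3 → ℤ) = Fin.snoc y d) :
    x = y ∧ c = d := by
  constructor
  · funext l
    have := congrFun h l.castSucc
    simpa using this
  · have := congrFun h (Fin.last 2)
    simpa only [Fin.snoc_last] using this

lemma km_lift {x y : Fin 2 → ℤ} (h : knightMove x y) (c : ℤ) :
    knightMove (Fin.snoc x c) (Fin.snoc y c) := by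
  obtain ⟨i, j, hij, h1, h2, h3⟩ := h
  refine ⟨i.castSucc, j.castSucc, by simpa [Fin.castSucc_inj] using hij, by simpa using h1,
    by simpa using h2, ?_⟩
  intro l hl1 hl2
  induction l using Fin.lastCases with
  | last => simp only [Fin.snoc_last]
  | cast l' =>
    simp only [Fin.snoc_castSucc]
    exact h3 l' (by simpa [Fin.castSucc_inj] using hl1) (by simpa [Fin.castSucc_inj] using hl2)

lemma km_cross {x y : Fin 2 → ℤ} {i : Fin 2} {ε : ℤ} (hε : ε = 2 ∨ ε = -2)
    (h : ∀ l, y l - x l = if l = i then ε else 0) {c d : ℤ} (hcd : |c - d| = 1) :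
    knightMove (Fin.snoc x c) (Fin.snoc y d) := by
  refine ⟨Fin.last 2, i.castSucc, (Fin.castSucc_lt_last i).ne', by simpa only [Fin.snoc_last] using hcd, ?_, ?_⟩
  · have := h i
    simp at this
    simp only [Fin.snoc_castSucc]
    have hx : x i - y i = -ε := by linarith
    rw [hx, abs_neg]
    rcases hε with rfl | rfl <;> norm_num
  · intro l hl1 hl2
    induction l using Fin.lastCases with
    | last => exact absurd rfl hl1
    | cast l' =>
      have hne : l' ≠ i := by
        intro he; exact hl2 (by rw [he])
      have := h l'
      rw [if_neg hne] at this
      simp only [Fin.snoc_castSucc]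
      omega

lemma onBoard_snoc {n : Fin 2 → ℕ} {x : Fin 2 → ℤ} {c : ℤ} (hx : onBoard n x)
    (hc1 : 1 ≤ c) (hc2 : c ≤ 2) : onBoard (Fin.snoc n 2) (Fin.snoc x c) := by
  intro l
  induction l using Fin.lastCases with
  | last => simpa using ⟨hc1, hc2⟩
  | cast l' => simpa using hx l'

lemma mod_inj_aux {N v1 v2 : ℕ} (h : v1 % N = v2 % N) (ha : 1 ≤ v1) (hb : v1 ≤ N)
    (hc : 1 ≤ v2) (hd : v2 ≤ N) : v1 = v2 := by
  rcases eq_or_lt_of_le hb with rfl | hlt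
  · rw [Nat.mod_self] at h
    rcases eq_or_lt_of_le hd with rfl | hlt2
    · rfl
    · rw [Nat.mod_eq_of_lt hlt2] at h; omega
  · rw [Nat.mod_eq_of_lt hlt] at h
    rcases eq_or_lt_of_le hd with rfl | hlt2
    · rw [Nat.mod_self] at h; omega
    · rw [Nat.mod_eq_of_lt hlt2] at h; omega

/-- Example "ex:2d": given a closed tour `a` of a 2-dimensional board containing
a well-oriented site with `a^{p+1} − a^q = a^{q+1} − a^p ∈ {±2eᵢ}`, the explicit
closed walk `(a^p,1) → (a^{q+1},2) → (a^{q+2},2) → … → (a^q,2) → (a^{p+1},1)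
→ … → (a^p,1)` is a Hamiltonian cycle of the knight graph on `B × [1,2]`. -/
theorem explicit_walk_is_tour (n : Fin 2 → ℕ) (N : ℕ)
    (a : ZMod N → Fin 2 → ℤ) (ha : IsClosedTour n N a)
    (p q : ZMod N) (i : Fin 2) (ε : ℤ) (hε : ε = 2 ∨ ε = -2)
    (h1 : ∀ l, a (p + 1) l - a q l = if l = i then ε else 0)
    (h2 : ∀ l, a (q + 1) l - a p l = if l = i then ε else 0) :
    IsClosedTour (Fin.snoc n 2) (2 * N)
      (fun j : ZMod (2 * N) =>
        if j.val = 0 then Fin.snoc (a p) 1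
        else if j.val ≤ N then Fin.snoc (a (q + (j.val : ZMod N))) 2
        else Fin.snoc (a (p + ((j.val - N : ℕ) : ZMod N))) 1) := by
  obtain ⟨hN, hb, hinj, hsurj, hmove⟩ := ha
  haveI : NeZero N := ⟨hN.ne'⟩
  haveI : NeZero (2 * N) := ⟨by omega⟩
  -- N ≥ 2 : otherwise p + 1 = q forces ε = 0
  have hN2 : 2 ≤ N := by
    by_contra hc
    have hN1 : N = 1 := by omega
    subst hN1
    have he : a (p + 1) = a q := congrArg a (Subsingleton.elim _ _)
    have hi := h1 i
    rw [he] at hi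
    simp at hi
    omega
  have hsucc : ∀ j : ZMod (2 * N), j.val + 1 < 2 * N → (j + 1).val = j.val + 1 := by
    intro j h
    have hj : (j + 1 : ZMod (2 * N)) = ((j.val + 1 : ℕ) : ZMod (2 * N)) := by
      push_cast [ZMod.natCast_zmod_val]
      ring
    rw [hj, ZMod.val_cast_of_lt h]
  have hwrap : ∀ j : ZMod (2 * N), j.val = 2 * N - 1 → j + 1 = 0 := by
    intro j h
    have hj : (j + 1 : ZMod (2 * N)) = ((j.val + 1 : ℕ) : ZMod (2 * N)) := by
      push_cast [ZMod.natCast_zmod_val]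
      ring
    rw [hj, h]
    have h2N : 2 * N - 1 + 1 = 2 * N := by omega
    rw [h2N, ZMod.natCast_self]
  have valinj : ∀ x y : ZMod (2 * N), x.val = y.val → x = y :=
    fun x y h => ZMod.val_injective (2 * N) h
  refine ⟨by omega, ?_, ?_, ?_, ?_⟩
  -- on board
  · intro j
    dsimp only
    by_cases e : j.val = 0
    · rw [if_pos e]; exact onBoard_snoc (hb p) (by norm_num) (by norm_num)
    · rw [if_neg e]
      by_cases f : j.val ≤ N
      · rw [if_pos f]; exact onBoard_snoc (hb _) (by norm_num) (by norm_num)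
      · rw [if_neg f]; exact onBoard_snoc (hb _) (by norm_num) (by norm_num)
  -- injective
  · intro j1 j2 h
    dsimp only at h
    have hv1 := ZMod.val_lt j1
    have hv2 := ZMod.val_lt j2
    by_cases e1 : j1.val = 0 <;> by_cases e2 : j2.val = 0
    · exact valinj _ _ (by omega)
    · rw [if_pos e1, if_neg e2] at h
      by_cases f2 : j2.val ≤ N
      · rw [if_pos f2] at h
        exact absurd (snoc_inj h).2 (by norm_num)
      · rw [if_neg f2] at h
        have hpq := hinj (snoc_inj h).1
        have h0 : ((j2.val - N : ℕ) : ZMod N) = 0 := by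
          have := left_eq_add.mp hpq
          exact this
        rw [ZMod.natCast_eq_zero_iff] at h0
        have := Nat.le_of_dvd (by omega) h0
        omega
    · rw [if_neg e1, if_pos e2] at h
      by_cases f1 : j1.val ≤ N
      · rw [if_pos f1] at h
        exact absurd (snoc_inj h).2 (by norm_num)
      · rw [if_neg f1] at h
        have hpq := hinj (snoc_inj h).1
        have h0 : ((j1.val - N : ℕ) : ZMod N) = 0 := by
          have := (add_eq_left.mp hpq)
          exact this
        rw [ZMod.natCast_eq_zero_iff] at h0
        have := Nat.le_of_dvd (by omega) h0
        omega
    · rw [if_neg e1, if_neg e2] at h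
      by_cases f1 : j1.val ≤ N <;> by_cases f2 : j2.val ≤ N
      · rw [if_pos f1, if_pos f2] at h
        have hpq := hinj (snoc_inj h).1
        have hc : ((j1.val : ℕ) : ZMod N) = ((j2.val : ℕ) : ZMod N) := add_left_cancel hpq
        rw [ZMod.natCast_eq_natCast_iff'] at hc
        exact valinj _ _ (mod_inj_aux hc (by omega) f1 (by omega) f2)
      · rw [if_pos f1, if_neg f2] at h
        exact absurd (snoc_inj h).2 (by norm_num)
      · rw [if_neg f1, if_pos f2] at h
        exact absurd (snoc_inj h).2 (by norm_num)
      · rw [if_neg f1, if_neg f2] at h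
        have hpq := hinj (snoc_inj h).1
        have hc : ((j1.val - N : ℕ) : ZMod N) = ((j2.val - N : ℕ) : ZMod N) :=
          add_left_cancel hpq
        rw [ZMod.natCast_eq_natCast_iff'] at hc
        rw [Nat.mod_eq_of_lt (by omega), Nat.mod_eq_of_lt (by omega)] at hc
        exact valinj _ _ (by omega)
    -- surjective
  · intro x hx
    have hy : onBoard n (fun l => x l.castSucc) := by
      intro l
      have := hx l.castSucc
      simpa using this
    have hlast : x (Fin.last 2) = 1 ∨ x (Fin.last 2) = 2 := by
      have := hx (Fin.last 2)
      simp only [Fin.snoc_last] at this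
      omega
    have hxs : x = Fin.snoc (fun l => x l.castSucc) (x (Fin.last 2)) := by
      funext l
      induction l using Fin.lastCases <;> simp only [Fin.snoc_last, Fin.snoc_castSucc]
    obtain ⟨m, hm⟩ := hsurj _ hy
    rcases hlast with hl1 | hl2
    · by_cases ht : (m - p).val = 0
      · refine ⟨0, ?_⟩
        have hmp : m = p := by
          have : m - p = 0 := by
            have := ZMod.natCast_zmod_val (m - p)
            rw [ht] at this
            simpa using this.symm
          rwa [sub_eq_zero] at this
        dsimp only
        rw [if_pos (ZMod.val_zero)]
        rw [hxs, ← hl1, ← hmp, hm]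
      · set t := (m - p).val with htdef
        have htlt : t < N := ZMod.val_lt _
        refine ⟨((N + t : ℕ) : ZMod (2 * N)), ?_⟩
        have hval : (((N + t : ℕ) : ZMod (2 * N))).val = N + t :=
          ZMod.val_cast_of_lt (by omega)
        dsimp only
        rw [if_neg (by omega), if_neg (by omega)]
        rw [hval]
        have hnt : N + t - N = t := by omega
        rw [hnt]
        have hcast : ((t : ℕ) : ZMod N) = m - p := ZMod.natCast_zmod_val _
        rw [hcast]
        have : p + (m - p) = m := by ring
        rw [this, hm]
        conv_rhs => rw [hxs]
        rw [hl1]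
    · by_cases ht : (m - q).val = 0
      · refine ⟨((N : ℕ) : ZMod (2 * N)), ?_⟩
        have hval : (((N : ℕ) : ZMod (2 * N))).val = N := ZMod.val_cast_of_lt (by omega)
        have hmq : m = q := by
          have : m - q = 0 := by
            have := ZMod.natCast_zmod_val (m - q)
            rw [ht] at this
            simpa using this.symm
          rwa [sub_eq_zero] at this
        dsimp only
        rw [if_neg (by omega), if_pos (by omega), hval, ZMod.natCast_self, add_zero]
        rw [hxs, ← hl2, ← hmq, hm]
      · set t := (m - q).val with htdef
        have htlt : t < N := ZMod.val_lt _
        refine ⟨((t : ℕ) : ZMod (2 * N)), ?_⟩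
        have hval : (((t : ℕ) : ZMod (2 * N))).val = t := ZMod.val_cast_of_lt (by omega)
        dsimp only
        rw [if_neg (by omega), if_pos (by omega), hval]
        have hcast : ((t : ℕ) : ZMod N) = m - q := ZMod.natCast_zmod_val _
        rw [hcast]
        have : q + (m - q) = m := by ring
        rw [this, hm]
        conv_rhs => rw [hxs]
        rw [hl2]
  -- moves
  · intro j
    dsimp only
    have hv := ZMod.val_lt j
    by_cases e : j.val = 0
    · have hs : (j + 1).val = 1 := by
        have := hsucc j (by omega)
        omega
      rw [if_pos e, if_neg (by omega), if_pos (by omega), hs]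
      have : ((1 : ℕ) : ZMod N) = 1 := Nat.cast_one
      rw [this]
      exact km_cross hε h2 (by norm_num)
    · by_cases f : j.val ≤ N
      · by_cases g : j.val = N
        · have hs : (j + 1).val = N + 1 := by
            have := hsucc j (by omega)
            omega
          rw [if_neg e, if_pos f, if_neg (by omega), if_neg (by omega), hs, g]
          have hq0 : ((N : ℕ) : ZMod N) = 0 := ZMod.natCast_self N
          rw [hq0, add_zero]
          have hn1 : N + 1 - N = 1 := by omega
          rw [hn1]
          have : ((1 : ℕ) : ZMod N) = 1 := Nat.cast_one
          rw [this]
          exact km_cross hε h1 (by norm_num)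
        · have hs : (j + 1).val = j.val + 1 := hsucc j (by omega)
          rw [if_neg e, if_pos f, if_neg (by omega), if_pos (by omega), hs]
          have hc : ((j.val + 1 : ℕ) : ZMod N) = ((j.val : ℕ) : ZMod N) + 1 := by push_cast; ring
          rw [hc, ← add_assoc]
          exact km_lift (hmove (q + ((j.val : ℕ) : ZMod N))) 2
      · by_cases g : j.val = 2 * N - 1
        · have hw : j + 1 = 0 := hwrap j g
          rw [if_neg e, if_neg f, hw, if_pos (ZMod.val_zero), g]
          have hnn : 2 * N - 1 - N = N - 1 := by omega
          rw [hnn]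
          have hp : p = p + ((N - 1 : ℕ) : ZMod N) + 1 := by
            have : ((N - 1 : ℕ) : ZMod N) + 1 = (((N - 1) + 1 : ℕ) : ZMod N) := by push_cast; ring
            rw [add_assoc, this]
            have hN1 : N - 1 + 1 = N := by omega
            rw [hN1, ZMod.natCast_self, add_zero]
          nth_rewrite 2 [hp]
          exact km_lift (hmove (p + ((N - 1 : ℕ) : ZMod N))) 1
        · have hs : (j + 1).val = j.val + 1 := hsucc j (by omega)
          rw [if_neg e, if_neg f, if_neg (by omega), if_neg (by omega), hs]
          have hd : j.val + 1 - N = (j.val - N) + 1 := by omega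
          rw [hd]
          have hc : (((j.val - N) + 1 : ℕ) : ZMod N) = ((j.val - N : ℕ) : ZMod N) + 1 := by
            push_cast; ring
          rw [hc, ← add_assoc]
          exact km_lift (hmove (p + ((j.val - N : ℕ) : ZMod N))) 1
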